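/- For every σ > 0 and every integer k ≥ 0, (1/2π) ∫₀^{2π} e^{ikθ} / (1 + 2σ(1 − cos θ))² dθ = (k+1)·ω^k/(4σ+1) + 2σ·ω^{k+1}/(4σ+1)^{3/2}. -/

import Mathlib

open Complex Set intervalIntegral Metric

set_option maxHeartbeats 1000000 in
/-- For every `σ > 0` and every integer `k ≥ 0`,
`(1/2π) ∫₀^{2π} e^{ikθ}/(1 + 2σ(1 - cos θ))² dθ
  = (k+1)ω^k/(4σ+1) + 2σω^{k+1}/(4σ+1)^{3/2}`,
where `ω = (2σ+1-√(4σ+1))/(2σ)`. -/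
theorem fourier_coeff_inv_symbol_sq (σ : ℝ) (hσ : 0 < σ) (k : ℕ) :
    (1 / (2 * Real.pi) : ℂ) *
        ∫ θ in (0:ℝ)..(2 * Real.pi),
          Complex.exp (Complex.I * (k : ℂ) * (θ : ℂ)) /
            ((1 + 2 * σ * (1 - Real.cos θ) : ℝ) : ℂ) ^ 2
      = ((((k : ℝ) + 1) * ((2 * σ + 1 - Real.sqrt (4 * σ + 1)) / (2 * σ)) ^ k / (4 * σ + 1) +
            2 * σ * ((2 * σ + 1 - Real.sqrt (4 * σ + 1)) / (2 * σ)) ^ (k + 1) /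
              (4 * σ + 1) ^ ((3 : ℝ) / 2) : ℝ) : ℂ) := by
  set s : ℝ := Real.sqrt (4*σ+1) with hs_def
  have hs2 : s^2 = 4*σ+1 := Real.sq_sqrt (by positivity)
  have hs_pos : 0 < s := Real.sqrt_pos.mpr (by positivity)
  have hs1 : 1 < s := by nlinarith
  have hslt : s < 2*σ+1 := by nlinarith
  set ω : ℝ := (2*σ+1-s)/(2*σ) with hω_def
  have h1 : (2*σ) * ω = 2*σ+1-s := by rw [hω_def]; field_simp
  have hω_pos : 0 < ω := by rw [hω_def]; exact div_pos (by linarith) (by linarith)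
  have hω_lt : ω < 1 := by rw [hω_def, div_lt_one (by linarith)]; linarith
  clear hω_def hs_def
  clear_value ω s
  have hq : 2*σ*ω^2 - 2*(2*σ+1)*ω + 2*σ = 0 := by nlinarith [h1, hs2]
  have hsb : 2*σ*(1-ω^2) = 2*ω*s := by linear_combination hq - 2*ω*h1
  have hu_pos : 0 < 1 - ω^2 := by nlinarith
  -- complex versions
  have hσC : (σ:ℂ) ≠ 0 := by exact_mod_cast hσ.ne'
  have hωC : (ω:ℂ) ≠ 0 := by exact_mod_cast hω_pos.ne'
  have hqC : 2*(σ:ℂ)*(ω:ℂ)^2 - 2*(2*σ+1)*ω + 2*σ = 0 := by exact_mod_cast congrArg Complex.ofReal hq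
  have huC : (1:ℂ) - (ω:ℂ)^2 ≠ 0 := by
    have : ((1 - ω^2 : ℝ) : ℂ) ≠ 0 := by exact_mod_cast hu_pos.ne'
    push_cast at this; exact this
  -- the holomorphic function
  set F : ℂ → ℂ := fun z => z^(k+1) / (1 - (ω:ℂ)*z)^2 with hF_def
  set U : Set ℂ := {z : ℂ | 1 - (ω:ℂ)*z ≠ 0} with hU_def
  have hU_open : IsOpen U := isOpen_ne_fun (by continuity) continuous_const
  have hmem : ∀ z : ℂ, ‖z‖ ≤ 1 → z ∈ U := by
    intro z hz h
    rw [sub_eq_zero] at h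
    have := congrArg (‖·‖) h
    simp only [norm_one, norm_mul, Complex.norm_real, Real.norm_eq_abs, abs_of_pos hω_pos] at this
    nlinarith [norm_nonneg z]
  have hsub : closedBall (0:ℂ) 1 ⊆ U := by
    intro z hz; exact hmem z (by simpa [Complex.dist_eq] using hz)
  have hdiff : DifferentiableOn ℂ F U := by
    apply DifferentiableOn.div
    · exact (differentiable_pow (k+1)).differentiableOn
    · exact ((differentiable_const (1:ℂ)).sub ((differentiable_id).const_mul _)).differentiableOn.pow 2
    · intro z hz; exact pow_ne_zero 2 hz
  have hωball : ((ω:ℝ):ℂ) ∈ ball (0:ℂ) 1 := by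
    rw [mem_ball, Complex.dist_eq, sub_zero, Complex.norm_real, Real.norm_eq_abs, abs_of_pos hω_pos]
    exact hω_lt
  -- Cauchy formula
  have hcauchy := Complex.two_pi_I_inv_smul_circleIntegral_sub_sq_inv_smul_of_differentiable
    hU_open hsub hdiff hωball
  -- derivative of F at ω
  have hp : HasDerivAt (fun z : ℂ => z^(k+1)) (((k:ℂ)+1)*(ω:ℂ)^k) (ω:ℂ) := by
    simpa using hasDerivAt_pow (k+1) ((ω:ℝ):ℂ)
  have hden : HasDerivAt (fun z : ℂ => (1 - (ω:ℂ)*z)^2)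
      (2*(1 - (ω:ℂ)*(ω:ℂ))^1*(-(ω:ℂ))) (ω:ℂ) := by
    have h0 : HasDerivAt (fun z : ℂ => 1 - (ω:ℂ)*z) (-(ω:ℂ)) (ω:ℂ) := by
      simpa using ((hasDerivAt_id ((ω:ℝ):ℂ)).const_mul ((ω:ℝ):ℂ)).const_sub 1
    exact h0.pow 2
  have hden_ne : ((1:ℂ) - (ω:ℂ)*(ω:ℂ))^2 ≠ 0 := by
    apply pow_ne_zero; rw [show (1:ℂ) - (ω:ℂ)*(ω:ℂ) = 1 - (ω:ℂ)^2 by ring]; exact huC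
  have hFd : HasDerivAt F
      (((((k:ℂ)+1)*(ω:ℂ)^k) * (1 - (ω:ℂ)*(ω:ℂ))^2 -
        (ω:ℂ)^(k+1) * (2*(1 - (ω:ℂ)*(ω:ℂ))^1*(-(ω:ℂ)))) / ((1 - (ω:ℂ)*(ω:ℂ))^2)^2) (ω:ℂ) :=
    hp.div hden hden_ne
  have hderiv := hFd.deriv
  -- pointwise identity
  have hpt : ∀ θ : ℝ,
      Complex.exp (Complex.I * (k : ℂ) * (θ : ℂ)) /
          ((1 + 2 * σ * (1 - Real.cos θ) : ℝ) : ℂ) ^ 2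
        = (-Complex.I * (2*(ω:ℂ)/(2*(σ:ℂ)))^2) *
            (deriv (circleMap 0 1) θ • (((circleMap 0 1 θ - (ω:ℂ))^2)⁻¹ • F (circleMap 0 1 θ))) := by
    intro θ
    set z : ℂ := Complex.exp ((θ:ℂ) * Complex.I) with hz_def
    have hz0 : z ≠ 0 := Complex.exp_ne_zero _
    have hzabs : ‖z‖ = 1 := by
      rw [hz_def]; exact Complex.norm_exp_ofReal_mul_I θ
    have hzU : (1:ℂ) - (ω:ℂ)*z ≠ 0 := hmem z (le_of_eq hzabs)
    have hzω : z - (ω:ℂ) ≠ 0 := by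
      intro h; rw [sub_eq_zero] at h
      have := congrArg (‖·‖) h
      rw [hzabs] at this; simp [abs_of_pos hω_pos] at this; linarith [hω_lt, this.ge]
    have hexpk : Complex.exp (Complex.I * (k : ℂ) * (θ : ℂ)) = z^k := by
      rw [hz_def, ← Complex.exp_nat_mul]; ring_nf
    have hexpneg : Complex.exp (-(θ:ℂ)*I) = z⁻¹ := by
      rw [show (-(θ:ℂ)*I) = -((θ:ℂ)*I) by ring, Complex.exp_neg, ← hz_def]
    have hcos : Complex.cos ((θ:ℝ):ℂ) = (z + z⁻¹)/2 := by
      rw [Complex.cos, hexpneg, ← hz_def]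
    have hD : ((1 + 2 * σ * (1 - Real.cos θ) : ℝ) : ℂ) * (2*(ω:ℂ)*z)
        = 2*(σ:ℂ)*(1 - (ω:ℂ)*z)*(z - (ω:ℂ)) := by
      push_cast
      rw [hcos]
      linear_combination (-z) * hqC + (-2*(σ:ℂ)*(ω:ℂ)) * (mul_inv_cancel₀ hz0)
    have hDne : ((1 + 2 * σ * (1 - Real.cos θ) : ℝ) : ℂ) ≠ 0 := by
      have : (0:ℝ) < 1 + 2 * σ * (1 - Real.cos θ) := by
        nlinarith [Real.cos_le_one θ, Real.neg_one_le_cos θ]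
      exact_mod_cast this.ne'
    have hDeq : ((1 + 2 * σ * (1 - Real.cos θ) : ℝ) : ℂ)
        = 2*(σ:ℂ)*(1 - (ω:ℂ)*z)*(z - (ω:ℂ)) / (2*(ω:ℂ)*z) := by
      rw [eq_div_iff (by simp [hωC, hz0])]; exact hD
    rw [hexpk, hDeq, deriv_circleMap, circleMap_zero]
    simp only [hF_def, smul_eq_mul, Complex.ofReal_one, one_mul, ← hz_def]
    rw [div_pow]
    field_simp
    ring_nf
    simp only [Complex.I_sq]
    ring
  -- convert the integral
  have hcirc_eq : (∫ θ in (0:ℝ)..(2*Real.pi),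
        Complex.exp (Complex.I * (k : ℂ) * (θ : ℂ)) /
          ((1 + 2 * σ * (1 - Real.cos θ) : ℝ) : ℂ) ^ 2)
      = (-Complex.I * (2*(ω:ℂ)/(2*(σ:ℂ)))^2) *
          ∮ z in C(0, 1), ((z - ((ω:ℝ):ℂ))^2)⁻¹ • F z := by
    rw [circleIntegral, ← intervalIntegral.integral_const_mul]
    exact intervalIntegral.integral_congr fun θ _ => hpt θ
  rw [hcirc_eq]
  have h2πI : (2*(Real.pi:ℂ)*Complex.I) ≠ 0 := by
    simp [Real.pi_ne_zero, Complex.I_ne_zero, Complex.ofReal_ne_zero]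
  have hInt : (∮ z in C(0, 1), ((z - ((ω:ℝ):ℂ))^2)⁻¹ • F z)
      = (2*(Real.pi:ℂ)*Complex.I) * deriv F (ω:ℂ) := by
    rw [← hcauchy, smul_eq_mul, ← mul_assoc, mul_inv_cancel₀ h2πI, one_mul]
  rw [hInt, hderiv]
  -- final algebra
  have hrpow : (4*σ+1:ℝ) ^ ((3:ℝ)/2) = s^3 := by
    rw [← hs2, ← Real.rpow_natCast s 2, ← Real.rpow_mul hs_pos.le,
      ← Real.rpow_natCast s 3]
    norm_num
  have hsqA : (2*σ*(1-ω^2))^2 = (2*ω*s)^2 := by rw [hsb]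
  have hcubeA : (2*σ*(1-ω^2))^3 = (2*ω*s)^3 := by rw [hsb]
  have hA : (1/(4*σ+1) : ℝ) = 4*ω^2/((2*σ)^2*(1-ω^2)^2) := by
    rw [← hs2]; rw [div_eq_div_iff (by positivity) (by positivity)]
    linear_combination hsqA
  have hB : (2*σ*ω/s^3 : ℝ) = 8*ω^4/((2*σ)^2*(1-ω^2)^3) := by
    rw [div_eq_div_iff (by positivity) (by positivity)]
    linear_combination ω * hcubeA
  have hRHS : (((k : ℝ) + 1) * ω ^ k / (4 * σ + 1) + 2 * σ * ω ^ (k + 1) / (4*σ+1) ^ ((3:ℝ)/2) : ℝ)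
      = ((k:ℝ)+1) * ω^k * (4*ω^2/((2*σ)^2*(1-ω^2)^2)) + ω^k * (8*ω^4/((2*σ)^2*(1-ω^2)^3)) := by
    rw [hrpow,
      show (((k:ℝ)+1) * ω ^ k / (4*σ+1)) = ((k:ℝ)+1) * ω^k * (1/(4*σ+1)) from by ring, hA,
      show (2*σ*ω^(k+1)/s^3 : ℝ) = ω^k * (2*σ*ω/s^3) from by ring, hB]
  rw [hRHS]
  push_cast
  have huC' : (1:ℂ) - (ω:ℂ)*(ω:ℂ) ≠ 0 := by
    rw [show (1:ℂ) - (ω:ℂ)*(ω:ℂ) = 1 - (ω:ℂ)^2 by ring]; exact huC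
  have hπ : (Real.pi : ℂ) ≠ 0 := by exact_mod_cast Real.pi_ne_zero
  field_simp
  ring_nf
  simp only [Complex.I_sq]
  ring
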